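/- arXiv:2106.06453 — 5 statements merged into one kernel-verified Lean document; each statement's English description precedes it below -/
import Mathlib

section
/- Let m, t, k be positive integers with t ≥ 2 and k ≥ max(2, 2·log m / log(3/e)). Let r_1, …, r_k : {1,…,m} → {1,…,2t} be random functions such that for every subset S ⊆ {1,…,m} with |S| ≤ t, the random variables (r_i(x)) for i ∈ {1,…,k} and x ∈ S are mutually independent, each uniformly distributed on {1,…,2t}. Then with probability at least 1 − 4·(3/4)^k, it simultaneously holds for every nonempty subset T ⊆ {1,…,m} with |T| ≤ t that there exist x ∈ T and i ∈ {1,…,k} such that r_i(x) ≠ r_i(y) for all y ∈ T \ {x}. -/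
open MeasureTheory ProbabilityTheory Finset
open scoped ENNReal NNReal


lemma factorial_bound (h : ℕ) : (h : ℝ) ^ h ≤ Real.exp 1 ^ h * h.factorial := by
  have h1 := Real.pow_div_factorial_le_exp (x := (h:ℝ)) (by positivity) h
  rw [div_le_iff₀ (by positivity)] at h1
  calc (h:ℝ)^h ≤ Real.exp h * h.factorial := h1
    _ = Real.exp 1 ^ h * h.factorial := by rw [← Real.exp_nat_mul, mul_one]


lemma keyReal (s t : ℕ) (hs2 : 2 ≤ s) (hst : s ≤ t) :
    ((2*t).choose (s/2) : ℝ) * ((s/2 : ℕ) : ℝ)^s / ((2*t : ℕ) : ℝ)^s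
      ≤ Real.sqrt (Real.exp 1 / 4) ^ s := by
  set h := s / 2 with hh
  set a := s - h with ha
  have hsplit : s = h + a := by omega
  have hh1 : 1 ≤ h := by omega
  have hha : h ≤ a := by omega
  have h4h : 4 * h ≤ 2 * t := by omega
  have he1 : (1:ℝ) ≤ Real.exp 1 := Real.one_le_exp zero_le_one
  have hH0 : (0:ℝ) < (h:ℝ) := by exact_mod_cast hh1
  set C : ℝ := ((2*t).choose h : ℝ) with hC
  set Nr : ℝ := ((2*t : ℕ) : ℝ) with hNr
  have hN0 : (0:ℝ) < Nr := by rw [hNr]; exact_mod_cast (by omega : 0 < 2*t)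
  set E : ℝ := Real.exp 1 with hE
  have hC0 : 0 ≤ C := by positivity
  have step1 : C * (h:ℝ)^h ≤ Nr^h * E^h := by
    have c1 : C ≤ Nr^h / (h.factorial : ℝ) := by
      have := Nat.choose_le_pow_div (α := ℝ) h (2*t)
      rw [hC, hNr]
      push_cast at this ⊢
      convert this using 2
    have c2 : (h:ℝ)^h ≤ E^h * h.factorial := factorial_bound h
    calc C * (h:ℝ)^h ≤ (Nr^h / (h.factorial : ℝ)) * (E^h * h.factorial) := by
          apply mul_le_mul c1 c2 (by positivity) (by positivity)
      _ = Nr^h * E^h := by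
          field_simp
  have hc4 : (0:ℝ) < E / 4 := by positivity
  have key2 : ((C * (h:ℝ)^s) / Nr^s)^2 ≤ (E/4)^s := by
    rw [div_pow, div_le_iff₀ (by positivity)]
    have expand : (E/4)^s * (Nr^s)^2 = E^s * Nr^(2*s) / 4^s := by
      rw [div_pow, ← pow_mul]
      ring
    rw [expand, le_div_iff₀ (by positivity)]
    have e1 : (C * (h:ℝ)^s)^2 * 4^s ≤ (Nr^h * E^h)^2 * ((h:ℝ)^a)^2 * 4^s := by
      have hrw : C * (h:ℝ)^s = (C * (h:ℝ)^h) * (h:ℝ)^a := by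
        rw [hsplit, pow_add]; ring
      rw [hrw, mul_pow (C * (h:ℝ)^h)]
      have hsq : (C * (h:ℝ)^h)^2 ≤ (Nr^h * E^h)^2 := pow_le_pow_left₀ (by positivity) step1 2
      exact mul_le_mul_of_nonneg_right (mul_le_mul_of_nonneg_right hsq (by positivity)) (by positivity)
    refine e1.trans ?_
    have e2 : (Nr^h * E^h)^2 * ((h:ℝ)^a)^2 * 4^s = Nr^(2*h) * (E^(2*h) * ((h:ℝ)^(2*a) * 4^s)) := by
      rw [mul_pow, ← pow_mul, ← pow_mul, ← pow_mul]
      ring_nf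
    rw [e2]
    have eE : E^(2*h) ≤ E^s := pow_le_pow_right₀ he1 (by omega)
    have e4 : (h:ℝ)^(2*a) * 4^s ≤ Nr^(2*a) := by
      have h4s : (4:ℝ)^s ≤ 4^(2*a) := pow_le_pow_right₀ (by norm_num) (by omega)
      calc (h:ℝ)^(2*a) * 4^s ≤ (h:ℝ)^(2*a) * 4^(2*a) := by
            apply mul_le_mul_of_nonneg_left h4s (by positivity)
        _ = (4*(h:ℝ))^(2*a) := by rw [mul_pow]; ring
        _ ≤ Nr^(2*a) := by
            apply pow_le_pow_left₀ (by positivity)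
            rw [hNr]
            have : ((4*h : ℕ):ℝ) ≤ ((2*t : ℕ):ℝ) := by exact_mod_cast h4h
            push_cast at this ⊢
            linarith
    calc Nr^(2*h) * (E^(2*h) * ((h:ℝ)^(2*a) * 4^s))
        ≤ Nr^(2*h) * (E^s * Nr^(2*a)) := by
          apply mul_le_mul_of_nonneg_left _ (by positivity)
          apply mul_le_mul eE e4 (by positivity) (by positivity)
      _ = E^s * Nr^(2*s) := by
          rw [hsplit, show 2*(h+a) = 2*h + 2*a by ring, pow_add]
          ring
  have hXnn : (0:ℝ) ≤ (C * (h:ℝ)^s) / Nr^s := by positivity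
  have hsq : (Real.sqrt (E/4))^s = Real.sqrt ((E/4)^s) := by
    rw [← Real.sqrt_sq (pow_nonneg (Real.sqrt_nonneg _) s)]
    congr 1
    rw [← pow_mul, mul_comm s 2, pow_mul, Real.sq_sqrt (le_of_lt hc4)]
  rw [hsq]
  exact (Real.le_sqrt hXnn (by positivity)).2 key2

lemma count_noiso {α V : Type*} [Fintype α] [Fintype V] [DecidableEq α] [DecidableEq V]
    (h : ℕ) (hfib : h ≤ Fintype.card V) (hsh : Fintype.card α / 2 ≤ h) :
    Nat.card {f : α → V // ∀ x, ∃ y, y ≠ x ∧ f x = f y}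
      ≤ (Fintype.card V).choose h * h ^ Fintype.card α := by
  classical
  rw [Nat.card_eq_fintype_card, Fintype.card_subtype]
  have hsub : (univ : Finset (α → V)).filter (fun f => ∀ x, ∃ y, y ≠ x ∧ f x = f y)
      ⊆ (Finset.powersetCard h (univ : Finset V)).biUnion
          (fun J => Fintype.piFinset (fun _ : α => J)) := by
    intro f hf
    simp only [mem_filter, mem_univ, true_and] at hf
    have himg : (univ.image f).card ≤ h := by
      have hcard : (univ : Finset α).card
          = ∑ b ∈ univ.image f, (univ.filter (fun x => f x = b)).card :=
        Finset.card_eq_sum_card_fiberwise (fun x _ => Finset.mem_image_of_mem f (mem_univ x))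
      have h2 : ∀ b ∈ univ.image f, 2 ≤ (univ.filter (fun x => f x = b)).card := by
        intro b hb
        obtain ⟨x, -, rfl⟩ := Finset.mem_image.1 hb
        obtain ⟨y, hyx, hxy⟩ := hf x
        refine Finset.one_lt_card.2 ⟨x, ?_, y, ?_, fun hxy' => hyx hxy'.symm⟩
        · simp
        · simp [hxy.symm]
      have hge : 2 * (univ.image f).card ≤ Fintype.card α := by
        calc 2 * (univ.image f).card = ∑ _b ∈ univ.image f, 2 := by
              rw [Finset.sum_const, smul_eq_mul, mul_comm]
          _ ≤ ∑ b ∈ univ.image f, (univ.filter (fun x => f x = b)).card :=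
              Finset.sum_le_sum h2
          _ = Fintype.card α := by rw [← hcard, Finset.card_univ]
      omega
    obtain ⟨J, hJsub, -, hJcard⟩ := Finset.exists_subsuperset_card_eq
      (Finset.subset_univ (univ.image f)) himg (by simpa using hfib)
    refine Finset.mem_biUnion.2 ⟨J, ?_, ?_⟩
    · simpa [Finset.mem_powersetCard_univ] using hJcard
    · simp only [Fintype.mem_piFinset]
      exact fun a => hJsub (Finset.mem_image_of_mem f (mem_univ a))
  calc ((univ : Finset (α → V)).filter (fun f => ∀ x, ∃ y, y ≠ x ∧ f x = f y)).card
      ≤ ((Finset.powersetCard h (univ : Finset V)).biUnion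
          (fun J => Fintype.piFinset (fun _ : α => J))).card := Finset.card_le_card hsub
    _ ≤ ∑ J ∈ Finset.powersetCard h (univ : Finset V),
          (Fintype.piFinset (fun _ : α => J)).card := Finset.card_biUnion_le
    _ ≤ ∑ _J ∈ Finset.powersetCard h (univ : Finset V), h ^ Fintype.card α := by
        refine Finset.sum_le_sum fun J hJ => ?_
        rw [Fintype.card_piFinset]
        rw [Finset.prod_const, Finset.card_univ]
        rw [Finset.mem_powersetCard_univ.1 hJ]
    _ = (Fintype.card V).choose h * h ^ Fintype.card α := by
        rw [Finset.sum_const, smul_eq_mul, Finset.card_powersetCard, Finset.card_univ]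

/-- With probability at least `1 - 4·(3/4)^k` over the choice of the
`k` (t-wise independent, uniform) random hash functions `rᵢ : [m] → [2t]`, every
nonempty subset `T ⊆ [m]` with `|T| ≤ t` contains an element `x` that is isolated
under some `rᵢ`. -/
theorem stmt0 (m t k : ℕ) (hm : 0 < m) (ht : 2 ≤ t)
    (hk : (k : ℝ) ≥ max 2 (2 * Real.log m / Real.log (3 / Real.exp 1)))
    {Ω : Type*} [MeasurableSpace Ω] (μ : Measure Ω) [IsProbabilityMeasure μ]
    (r : Fin k → Fin m → Ω → Fin (2 * t))
    (hindep : ∀ S : Finset (Fin m), S.card ≤ t →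
      iIndepFun
        (fun p : Fin k × {x : Fin m // x ∈ S} => fun ω => r p.1 p.2.1 ω) μ)
    (hunif : ∀ S : Finset (Fin m), S.card ≤ t → ∀ (i : Fin k), ∀ x ∈ S,
      ∀ c : Fin (2 * t), μ {ω | r i x ω = c} = 1 / (2 * t)) :
    (1 : ℝ) - 4 * (3 / 4) ^ k ≤
      (μ {ω | ∀ T : Finset (Fin m), T.Nonempty → T.card ≤ t →
        ∃ x ∈ T, ∃ i : Fin k, ∀ y ∈ T, y ≠ x → r i x ω ≠ r i y ω}).toReal := by
  classical
  have hk2 : 2 ≤ k := by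
    have h2 : (2:ℝ) ≤ (k:ℝ) := le_trans (le_max_left _ _) hk
    exact_mod_cast h2
  set c : ℝ := Real.sqrt (Real.exp 1 / 4) with hc
  set d : ℝ := Real.sqrt (3 / Real.exp 1) with hd
  have hc0 : 0 ≤ c := Real.sqrt_nonneg _
  have hd0 : 0 ≤ d := Real.sqrt_nonneg _
  have hE0 : (0:ℝ) < Real.exp 1 := Real.exp_pos 1
  have hE3 : Real.exp 1 < 3 := by
    have := Real.exp_one_lt_d9
    linarith
  -- m ≤ d ^ k
  have hm_le : (m:ℝ) ≤ d ^ k := by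
    have hlogpos : 0 < Real.log (3 / Real.exp 1) := by
      apply Real.log_pos
      rw [lt_div_iff₀ hE0]
      linarith
    have h1 : 2 * Real.log m / Real.log (3 / Real.exp 1) ≤ (k:ℝ) :=
      le_trans (le_max_right _ _) hk
    have h2 : 2 * Real.log m ≤ (k:ℝ) * Real.log (3 / Real.exp 1) := by
      rw [div_le_iff₀ hlogpos] at h1
      linarith
    have hm0 : (0:ℝ) < m := by exact_mod_cast hm
    have h3 : ((m:ℝ))^2 ≤ (3 / Real.exp 1) ^ k := by
      have hme : ((m:ℝ))^2 = Real.exp (2 * Real.log m) := by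
        rw [show (2:ℝ) * Real.log m = ((2:ℕ):ℝ) * Real.log m by norm_num,
          Real.exp_nat_mul, Real.exp_log hm0]
      have hre : (3 / Real.exp 1) ^ k = Real.exp ((k:ℝ) * Real.log (3 / Real.exp 1)) := by
        rw [Real.exp_nat_mul, Real.exp_log (by positivity)]
      rw [hme, hre]
      exact Real.exp_le_exp.2 (by linarith)
    have hd2 : d ^ 2 = 3 / Real.exp 1 := Real.sq_sqrt (by positivity)
    have : ((m:ℝ))^2 ≤ (d^k)^2 := by
      rw [← pow_mul, mul_comm k 2, pow_mul, hd2]; exact h3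
    exact le_of_pow_le_pow_left₀ two_ne_zero (by positivity) this
  -- per-T bad set bound
  have hbadT : ∀ T : Finset (Fin m), 2 ≤ T.card → T.card ≤ t →
      μ {ω | ∀ x ∈ T, ∀ i : Fin k, ∃ y ∈ T, y ≠ x ∧ r i x ω = r i y ω}
        ≤ ENNReal.ofReal ((c ^ k) ^ T.card) := by
    intro T hT2 hTt
    set s := T.card with hs
    set h := s / 2 with hh
    set P : (Fin k × {x : Fin m // x ∈ T} → Fin (2*t)) → Prop :=
      fun g => ∀ (i : Fin k) (x : {x : Fin m // x ∈ T}), ∃ y, y ≠ x ∧ g (i,x) = g (i,y) with hP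
    have hNpos : 0 < 2*t := by omega
    have hNR : (0:ℝ) < ((2*t : ℕ):ℝ) := by exact_mod_cast hNpos
    -- inclusion into union of atoms
    have hsub : {ω | ∀ x ∈ T, ∀ i : Fin k, ∃ y ∈ T, y ≠ x ∧ r i x ω = r i y ω}
        ⊆ ⋃ g ∈ Finset.univ.filter P,
            ⋂ p : Fin k × {x : Fin m // x ∈ T}, {ω | r p.1 p.2.1 ω = g p} := by
      intro ω hω
      refine Set.mem_iUnion₂.2 ⟨fun p => r p.1 p.2.1 ω, ?_, ?_⟩
      · simp only [Finset.mem_filter, Finset.mem_univ, true_and, hP]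
        intro i x
        obtain ⟨y, hyT, hyx, heq⟩ := hω x.1 x.2 i
        exact ⟨⟨y, hyT⟩, fun hcon => hyx (congrArg Subtype.val hcon), heq⟩
      · exact Set.mem_iInter.2 fun p => rfl
    -- atom measure
    have hatom : ∀ g ∈ Finset.univ.filter P,
        μ (⋂ p : Fin k × {x : Fin m // x ∈ T}, {ω | r p.1 p.2.1 ω = g p})
          = ((2*t : ℕ) : ℝ≥0∞)⁻¹ ^ (k * s) := by
      intro g _
      rw [(hindep T hTt).meas_iInter (s := fun p => {ω | r p.1 p.2.1 ω = g p})
        (fun p => ⟨{g p}, MeasurableSet.singleton _, rfl⟩)]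
      have hval : ∀ p : Fin k × {x : Fin m // x ∈ T},
          μ {ω | r p.1 p.2.1 ω = g p} = ((2*t : ℕ) : ℝ≥0∞)⁻¹ := by
        intro p
        rw [hunif T hTt p.1 p.2.1 p.2.2 (g p), one_div]
        norm_cast
      rw [Finset.prod_congr rfl (fun p _ => hval p), Finset.prod_const, Finset.card_univ,
        Fintype.card_prod, Fintype.card_fin, Fintype.card_coe]
    -- counting
    set Bq := Nat.card {f : {x : Fin m // x ∈ T} → Fin (2*t) // ∀ x, ∃ y, y ≠ x ∧ f x = f y}
      with hBq
    have hcardP : (Finset.univ.filter P).card = Bq ^ k := by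
      have h1 : (Finset.univ.filter P).card = Nat.card {g // P g} := by
        rw [Nat.card_eq_fintype_card, Fintype.card_subtype]
      rw [h1]
      have e : {g // P g} ≃
          (Fin k → {f : {x : Fin m // x ∈ T} → Fin (2*t) // ∀ x, ∃ y, y ≠ x ∧ f x = f y}) :=
        { toFun := fun g i => ⟨fun x => g.1 (i, x), fun x => g.2 i x⟩
          invFun := fun F => ⟨fun p => (F p.1).1 p.2, fun i x => (F i).2 x⟩
          left_inv := fun g => rfl
          right_inv := fun F => rfl }
      rw [Nat.card_congr e, Nat.card_fun, show Nat.card (Fin k) = k by simp]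
    have hfib : h ≤ Fintype.card (Fin (2*t)) := by
      rw [Fintype.card_fin]
      have h1 : h ≤ t := le_trans (Nat.div_le_self s 2) hTt
      have h2 : t ≤ 2*t := Nat.le_mul_of_pos_left t (by norm_num)
      exact le_trans h1 h2
    have hsh : Fintype.card {x : Fin m // x ∈ T} / 2 ≤ h := by
      rw [Fintype.card_coe]
    have hBqle : Bq ≤ (2*t).choose h * h ^ s := by
      have h0 := count_noiso (α := {x : Fin m // x ∈ T}) (V := Fin (2*t)) h hfib hsh
      rw [Fintype.card_fin, Fintype.card_coe] at h0
      exact h0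
    -- real bound
    have hreal : ((Bq:ℝ) / ((2*t : ℕ):ℝ)^s)^k ≤ (c^k)^s := by
      have h1 : (Bq:ℝ) / ((2*t : ℕ):ℝ)^s ≤ c^s := by
        have h2 : (Bq:ℝ) ≤ ((2*t).choose h : ℝ) * (h:ℝ)^s := by exact_mod_cast hBqle
        refine le_trans ?_ (keyReal s t hT2 hTt)
        gcongr
      calc ((Bq:ℝ) / ((2*t : ℕ):ℝ)^s)^k ≤ (c^s)^k :=
            pow_le_pow_left₀ (by positivity) h1 k
        _ = (c^k)^s := by rw [← pow_mul, mul_comm s k, pow_mul]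
    -- assemble
    calc μ {ω | ∀ x ∈ T, ∀ i : Fin k, ∃ y ∈ T, y ≠ x ∧ r i x ω = r i y ω}
        ≤ μ (⋃ g ∈ Finset.univ.filter P,
            ⋂ p : Fin k × {x : Fin m // x ∈ T}, {ω | r p.1 p.2.1 ω = g p}) :=
          measure_mono hsub
      _ ≤ ∑ g ∈ Finset.univ.filter P,
            μ (⋂ p : Fin k × {x : Fin m // x ∈ T}, {ω | r p.1 p.2.1 ω = g p}) :=
          measure_biUnion_finset_le _ _
      _ = ((Finset.univ.filter P).card : ℝ≥0∞) * ((2*t : ℕ) : ℝ≥0∞)⁻¹ ^ (k * s) := by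
          rw [Finset.sum_congr rfl hatom, Finset.sum_const, nsmul_eq_mul]
      _ = ENNReal.ofReal ((Bq:ℝ)^k * (((2*t : ℕ):ℝ))⁻¹^(k*s)) := by
          rw [hcardP]
          rw [ENNReal.ofReal_mul (by positivity), ENNReal.ofReal_pow (by positivity),
            ENNReal.ofReal_pow (by positivity), ENNReal.ofReal_inv_of_pos hNR,
            ENNReal.ofReal_natCast, ENNReal.ofReal_natCast]
          push_cast
          ring
      _ ≤ ENNReal.ofReal ((c^k)^s) := by
          apply ENNReal.ofReal_le_ofReal
          calc (Bq:ℝ)^k * (((2*t : ℕ):ℝ))⁻¹^(k*s)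
              = ((Bq:ℝ) / ((2*t : ℕ):ℝ)^s)^k := by
                rw [div_pow, ← pow_mul, mul_comm s k, div_eq_mul_inv, ← inv_pow]
            _ ≤ (c^k)^s := hreal
  -- sum bound
  set P : Finset (Finset (Fin m)) :=
    (univ : Finset (Finset (Fin m))).filter (fun T => 2 ≤ T.card ∧ T.card ≤ t) with hPdef
  have hsum : ∑ T ∈ P, (c^k)^T.card ≤ 4*(3/4)^k := by
    rw [hPdef]
    have hc0 : 0 ≤ c := hc ▸ Real.sqrt_nonneg _
    have hd0 : 0 ≤ d := hd ▸ Real.sqrt_nonneg _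
    have hE0 : (0:ℝ) < Real.exp 1 := Real.exp_pos 1
    set u : ℝ := c * d with hu
    have hu0 : 0 ≤ u := mul_nonneg hc0 hd0
    have hu2 : u ^ 2 = 3 / 4 := by
      rw [hu, hc, hd, ← Real.sqrt_mul (by positivity)]
      rw [show Real.exp 1 / 4 * (3 / Real.exp 1) = 3/4 by field_simp]
      exact Real.sq_sqrt (by norm_num)
    have hu1 : u ≤ 1 := by nlinarith
    set w : ℝ := u ^ k with hw
    have hw0 : 0 ≤ w := pow_nonneg hu0 k
    have hw34 : w ≤ 3/4 := by
      calc w ≤ u ^ 2 := pow_le_pow_of_le_one hu0 hu1 hk2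
        _ = 3/4 := hu2
    have hw2 : w ^ 2 = (3/4) ^ k := by
      rw [hw, ← pow_mul, mul_comm k 2, pow_mul, hu2]
    -- group by cardinality
    have hgroup : (univ : Finset (Finset (Fin m))).filter (fun T => 2 ≤ T.card ∧ T.card ≤ t)
        = (Finset.Icc 2 t).biUnion (fun s => Finset.powersetCard s univ) := by
      ext T
      simp only [mem_filter, mem_univ, true_and, mem_biUnion, Finset.mem_Icc,
        Finset.mem_powersetCard_univ]
      constructor
      · rintro ⟨h1, h2⟩; exact ⟨T.card, ⟨h1, h2⟩, rfl⟩
      · rintro ⟨s, ⟨h1, h2⟩, rfl⟩; exact ⟨h1, h2⟩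
    have hdisj : (↑(Finset.Icc 2 t) : Set ℕ).PairwiseDisjoint
        (fun s => Finset.powersetCard s (univ : Finset (Fin m))) := by
      intro s1 _ s2 _ hne
      refine Finset.disjoint_left.2 fun T h1 h2 => hne ?_
      rw [← Finset.mem_powersetCard_univ.1 h1, ← Finset.mem_powersetCard_univ.1 h2]
    rw [hgroup, Finset.sum_biUnion hdisj]
    have hinner : ∀ s ∈ Finset.Icc 2 t,
        ∑ T ∈ Finset.powersetCard s (univ : Finset (Fin m)), (c^k)^T.card
          = (m.choose s : ℝ) * (c^k)^s := by
      intro s _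
      rw [Finset.sum_congr rfl (fun T hT => by rw [Finset.mem_powersetCard_univ.1 hT]),
        Finset.sum_const, Finset.card_powersetCard, Finset.card_univ, Fintype.card_fin,
        nsmul_eq_mul]
    rw [Finset.sum_congr rfl hinner]
    have hterm : ∀ s ∈ Finset.Icc 2 t, (m.choose s : ℝ) * (c^k)^s ≤ w ^ s := by
      intro s _
      have h1 : (m.choose s : ℝ) ≤ (m:ℝ)^s := by exact_mod_cast Nat.choose_le_pow m s
      have h2 : ((m:ℝ))^s ≤ (d^k)^s := pow_le_pow_left₀ (by positivity) hm_le s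
      calc (m.choose s : ℝ) * (c^k)^s ≤ (d^k)^s * (c^k)^s := by
            apply mul_le_mul (le_trans h1 h2) le_rfl (by positivity) (by positivity)
        _ = w ^ s := by
            rw [hw, hu, ← mul_pow, ← mul_pow, mul_comm c d]
    refine le_trans (Finset.sum_le_sum hterm) ?_
    -- geometric bound
    have hrw : Finset.Icc 2 t = Finset.Ico 2 (t+1) := by rw [Finset.Ico_add_one_right_eq_Icc]
    rw [hrw, Finset.sum_Ico_eq_sum_range]
    have hgeom : ∑ j ∈ Finset.range (t+1-2), w^(2+j) = w^2 * ∑ j ∈ Finset.range (t+1-2), w^j := by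
      rw [Finset.mul_sum]
      exact Finset.sum_congr rfl fun j _ => by rw [pow_add]
    rw [hgeom]
    have hgs : ∑ j ∈ Finset.range (t+1-2), w^j ≤ 4 := by
      set n := t+1-2
      have hmul := geom_sum_mul w n
      have hpn : 0 ≤ w ^ n := pow_nonneg hw0 n
      have hsnn : 0 ≤ ∑ j ∈ Finset.range n, w^j :=
        Finset.sum_nonneg fun j _ => pow_nonneg hw0 j
      nlinarith [hmul, hpn, hsnn, hw34]
    calc w^2 * ∑ j ∈ Finset.range (t+1-2), w^j ≤ w^2 * 4 := by
          apply mul_le_mul_of_nonneg_left hgs (by positivity)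
      _ = 4 * (3/4)^k := by rw [hw2]; ring
  -- complement inclusion
  set A : Set Ω := {ω | ∀ T : Finset (Fin m), T.Nonempty → T.card ≤ t →
        ∃ x ∈ T, ∃ i : Fin k, ∀ y ∈ T, y ≠ x → r i x ω ≠ r i y ω} with hA
  have hcomp : Aᶜ ⊆ ⋃ T ∈ P,
      {ω | ∀ x ∈ T, ∀ i : Fin k, ∃ y ∈ T, y ≠ x ∧ r i x ω = r i y ω} := by
    intro ω hω
    simp only [hA, Set.mem_compl_iff, Set.mem_setOf_eq, not_forall] at hω
    obtain ⟨T, hTne, hTt, hT⟩ := hω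
    push_neg at hT
    have hT2 : 2 ≤ T.card := by
      obtain ⟨x, hx⟩ := hTne
      obtain ⟨y, hy, hyx, -⟩ := hT x hx ⟨0, by omega⟩
      exact Finset.one_lt_card.2 ⟨y, hy, x, hx, hyx⟩
    refine Set.mem_iUnion₂.2 ⟨T, ?_, hT⟩
    simp only [hPdef, Finset.mem_filter, Finset.mem_univ, true_and]
    exact ⟨hT2, hTt⟩
  -- measure of complement
  have hmc : μ Aᶜ ≤ ENNReal.ofReal (4*(3/4)^k) := by
    calc μ Aᶜ ≤ μ (⋃ T ∈ P, {ω | ∀ x ∈ T, ∀ i : Fin k, ∃ y ∈ T, y ≠ x ∧ r i x ω = r i y ω}) :=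
          measure_mono hcomp
      _ ≤ ∑ T ∈ P, μ {ω | ∀ x ∈ T, ∀ i : Fin k, ∃ y ∈ T, y ≠ x ∧ r i x ω = r i y ω} :=
          measure_biUnion_finset_le _ _
      _ ≤ ∑ T ∈ P, ENNReal.ofReal ((c^k)^T.card) := by
          refine Finset.sum_le_sum fun T hT => ?_
          rw [hPdef] at hT
          simp only [Finset.mem_filter, Finset.mem_univ, true_and] at hT
          exact hbadT T hT.1 hT.2
      _ = ENNReal.ofReal (∑ T ∈ P, (c^k)^T.card) := by
          rw [ENNReal.ofReal_sum_of_nonneg fun T _ => by positivity]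
      _ ≤ ENNReal.ofReal (4*(3/4)^k) := ENNReal.ofReal_le_ofReal hsum
  -- conclude
  have hone : (1:ℝ≥0∞) ≤ μ A + μ Aᶜ := by
    rw [← measure_univ (μ := μ)]
    rw [← Set.union_compl_self A]
    exact measure_union_le _ _
  have hge : ENNReal.ofReal (1 - 4*(3/4)^k) ≤ μ A := by
    have h1 : (1:ℝ≥0∞) - μ Aᶜ ≤ μ A := by
      rw [tsub_le_iff_right]
      exact hone
    have h2 : (1:ℝ≥0∞) - ENNReal.ofReal (4*(3/4)^k) ≤ 1 - μ Aᶜ :=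
      tsub_le_tsub_left hmc 1
    have h3 : ENNReal.ofReal (1 - 4*(3/4)^k) ≤ 1 - ENNReal.ofReal (4*(3/4)^k) := by
      rw [ENNReal.ofReal_sub _ (by positivity)]
      simp
    exact le_trans (le_trans h3 h2) h1
  have hfin : μ A ≠ ⊤ := measure_ne_top μ A
  exact (ENNReal.ofReal_le_iff_le_toReal hfin).1 hge
end

section
/- Let m, t, k be positive integers. Let r_1, …, r_k : {1,…,m} → {1,…,2t} be random functions such that for every subset S ⊆ {1,…,m} with |S| ≤ t, the random variables (r_i(x)) for i ∈ {1,…,k} and x ∈ S are mutually independent, each uniformly distributed on {1,…,2t}. Let E denote the event that there exists a subset T ⊆ {1,…,m} with 2 ≤ |T| ≤ t such that for every x ∈ T and every i ∈ {1,…,k} there is some y ∈ T \ {x} with r_i(x) = r_i(y). Then Pr[E] ≤ Σ_{j=2}^{t} C(m,j) · C(2t, ⌊j/2⌋)^k · (⌊j/2⌋/(2t))^{j·k}, where C(a,b) denotes the binomial coefficient. -/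
open MeasureTheory ProbabilityTheory
open scoped ENNReal

lemma image_card_le_half {α β : Type*} [DecidableEq α] [DecidableEq β]
    (T : Finset α) (g : α → β)
    (h : ∀ x ∈ T, ∃ y ∈ T, y ≠ x ∧ g x = g y) : (T.image g).card ≤ T.card / 2 := by
  rw [Nat.le_div_iff_mul_le (by norm_num)]
  have hfib : T.card = ∑ v ∈ T.image g, (T.filter (fun a => g a = v)).card :=
    Finset.card_eq_sum_card_fiberwise (fun x hx => Finset.mem_image_of_mem g hx)
  calc (T.image g).card * 2 = ∑ _v ∈ T.image g, 2 := by
        rw [Finset.sum_const, smul_eq_mul, mul_comm]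
    _ ≤ ∑ v ∈ T.image g, (T.filter (fun a => g a = v)).card := by
        refine Finset.sum_le_sum fun v hv => ?_
        obtain ⟨x, hx, hgx⟩ := Finset.mem_image.1 hv
        obtain ⟨y, hy, hyx, hxy⟩ := h x hx
        refine Finset.one_lt_card.2 ⟨x, ?_, y, ?_, hyx.symm⟩
        · exact Finset.mem_filter.2 ⟨hx, hgx⟩
        · exact Finset.mem_filter.2 ⟨hy, by rw [← hxy, hgx]⟩
    _ = T.card := hfib.symm

/-- The probability of the event `E` (some subset `T` with
`2 ≤ |T| ≤ t` has no isolated element under any of the `k` hash functions)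
is bounded by `Σ_{j=2}^{t} C(m,j) · C(2t,⌊j/2⌋)^k · (⌊j/2⌋/(2t))^{j·k}`. -/
theorem stmt2 (m t k : ℕ) (hm : 0 < m) (ht : 0 < t) (hk : 0 < k)
    {Ω : Type*} [MeasurableSpace Ω] (μ : Measure Ω) [IsProbabilityMeasure μ]
    (r : Fin k → Fin m → Ω → Fin (2 * t))
    (hindep : ∀ S : Finset (Fin m), S.card ≤ t →
      iIndepFun
        (fun p : Fin k × {x : Fin m // x ∈ S} => fun ω => r p.1 p.2.1 ω) μ)
    (hunif : ∀ S : Finset (Fin m), S.card ≤ t → ∀ (i : Fin k), ∀ x ∈ S,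
      ∀ c : Fin (2 * t), μ {ω | r i x ω = c} = 1 / (2 * t)) :
    (μ {ω | ∃ T : Finset (Fin m), 2 ≤ T.card ∧ T.card ≤ t ∧
        ∀ x ∈ T, ∀ i : Fin k, ∃ y ∈ T, y ≠ x ∧ r i x ω = r i y ω}).toReal ≤
      ∑ j ∈ Finset.Icc 2 t, (m.choose j : ℝ) * ((2 * t).choose (j / 2) : ℝ) ^ k *
        (((j / 2 : ℕ) : ℝ) / (2 * t)) ^ (j * k) := by
  classical
  set bad : Finset (Fin m) → Set Ω := fun T =>
    {ω | ∀ x ∈ T, ∀ i : Fin k, ∃ y ∈ T, y ≠ x ∧ r i x ω = r i y ω} with hbaddef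
  -- single-coordinate bound
  have hsingle : ∀ T : Finset (Fin m), T.card ≤ t → ∀ i : Fin k, ∀ x ∈ T,
      ∀ V : Finset (Fin (2 * t)), μ {ω | r i x ω ∈ V} ≤ (V.card : ℝ≥0∞) / (2 * (t : ℝ≥0∞)) := by
    intro T hT i x hx V
    have hset : {ω | r i x ω ∈ V} = ⋃ c ∈ V, {ω | r i x ω = c} := by
      ext ω; simp
    rw [hset]
    calc μ (⋃ c ∈ V, {ω | r i x ω = c}) ≤ ∑ c ∈ V, μ {ω | r i x ω = c} :=
        measure_biUnion_finset_le _ _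
      _ = ∑ _c ∈ V, 1 / (2 * (t : ℝ≥0∞)) :=
          Finset.sum_congr rfl fun c _ => hunif T hT i x hx c
      _ = (V.card : ℝ≥0∞) / (2 * (t : ℝ≥0∞)) := by
          rw [Finset.sum_const, nsmul_eq_mul, mul_one_div]
  -- key bound for a fixed T
  have key : ∀ T : Finset (Fin m), T.card ≤ t →
      μ (bad T) ≤ (((2 * t).choose (T.card / 2) : ℝ≥0∞)) ^ k *
        (((T.card / 2 : ℕ) : ℝ≥0∞) / (2 * (t : ℝ≥0∞))) ^ (T.card * k) := by
    intro T hT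
    set j := T.card with hj
    have hj2 : j / 2 ≤ 2 * t := by omega
    set 𝒱 : Finset (Fin k → Finset (Fin (2 * t))) :=
      Fintype.piFinset (fun _ => Finset.univ.powersetCard (j / 2)) with h𝒱
    set C : (Fin k → Finset (Fin (2 * t))) → Set Ω := fun V =>
      ⋂ p : Fin k × {x : Fin m // x ∈ T}, {ω | r p.1 p.2.1 ω ∈ V p.1} with hCdef
    have hsub : bad T ⊆ ⋃ V ∈ 𝒱, C V := by
      intro ω hω
      have himg : ∀ i : Fin k, ∃ V : Finset (Fin (2 * t)),
          T.image (fun x => r i x ω) ⊆ V ∧ V.card = j / 2 := by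
        intro i
        have hle : (T.image (fun x => r i x ω)).card ≤ j / 2 :=
          image_card_le_half T _ (fun x hx => hω x hx i)
        obtain ⟨V, hV1, _, hV3⟩ := Finset.exists_subsuperset_card_eq
          (Finset.subset_univ (T.image (fun x => r i x ω))) hle
          (by simpa using hj2)
        exact ⟨V, hV1, hV3⟩
      choose V hV1 hV2 using himg
      refine Set.mem_iUnion₂.2 ⟨V, ?_, ?_⟩
      · exact Fintype.mem_piFinset.2 fun i =>
          Finset.mem_powersetCard.2 ⟨Finset.subset_univ _, hV2 i⟩
      · exact Set.mem_iInter.2 fun p =>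
          hV1 p.1 (Finset.mem_image_of_mem _ p.2.2)
    have hcardidx : Fintype.card (Fin k × {x : Fin m // x ∈ T}) = j * k := by
      rw [Fintype.card_prod, Fintype.card_fin, Fintype.card_coe, mul_comm]
    calc μ (bad T) ≤ μ (⋃ V ∈ 𝒱, C V) := measure_mono hsub
      _ ≤ ∑ V ∈ 𝒱, μ (C V) := measure_biUnion_finset_le _ _
      _ ≤ ∑ _V ∈ 𝒱, (((j / 2 : ℕ) : ℝ≥0∞) / (2 * (t : ℝ≥0∞))) ^ (j * k) := by
          refine Finset.sum_le_sum fun V hV => ?_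
          have hVcard : ∀ i, (V i).card = j / 2 := fun i =>
            (Finset.mem_powersetCard.1 (Fintype.mem_piFinset.1 hV i)).2
          have hprod : μ (C V) = ∏ p : Fin k × {x : Fin m // x ∈ T},
              μ {ω | r p.1 p.2.1 ω ∈ V p.1} := by
            refine (hindep T hT).meas_iInter fun p => ?_
            exact ⟨(V p.1 : Set (Fin (2 * t))), MeasurableSpace.measurableSet_top, rfl⟩
          rw [hprod]
          calc ∏ p : Fin k × {x : Fin m // x ∈ T}, μ {ω | r p.1 p.2.1 ω ∈ V p.1}
              ≤ ∏ _p : Fin k × {x : Fin m // x ∈ T},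
                  (((j / 2 : ℕ) : ℝ≥0∞) / (2 * (t : ℝ≥0∞))) := by
                refine Finset.prod_le_prod' fun p _ => ?_
                have := hsingle T hT p.1 p.2.1 p.2.2 (V p.1)
                rwa [hVcard p.1] at this
            _ = (((j / 2 : ℕ) : ℝ≥0∞) / (2 * (t : ℝ≥0∞))) ^ (j * k) := by
                rw [Finset.prod_const, Finset.card_univ, hcardidx]
      _ = (((2 * t).choose (j / 2) : ℝ≥0∞)) ^ k *
            (((j / 2 : ℕ) : ℝ≥0∞) / (2 * (t : ℝ≥0∞))) ^ (j * k) := by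
          rw [Finset.sum_const, nsmul_eq_mul]
          congr 1
          rw [h𝒱, Fintype.card_piFinset_const, Finset.card_powersetCard,
            Finset.card_univ, Fintype.card_fin]
          push_cast
          ring
  -- union bound and grouping by cardinality
  set A : Finset (Finset (Fin m)) :=
    Finset.univ.filter (fun T => 2 ≤ T.card ∧ T.card ≤ t) with hAdef
  have hEsub : {ω | ∃ T : Finset (Fin m), 2 ≤ T.card ∧ T.card ≤ t ∧
      ∀ x ∈ T, ∀ i : Fin k, ∃ y ∈ T, y ≠ x ∧ r i x ω = r i y ω} ⊆ ⋃ T ∈ A, bad T := by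
    intro ω hω
    obtain ⟨T, h1, h2, h3⟩ := hω
    exact Set.mem_iUnion₂.2 ⟨T, Finset.mem_filter.2 ⟨Finset.mem_univ _, h1, h2⟩, h3⟩
  have hA : A = (Finset.Icc 2 t).biUnion (fun j => Finset.univ.powersetCard j) := by
    ext T
    simp only [hAdef, Finset.mem_filter, Finset.mem_univ, true_and, Finset.mem_biUnion,
      Finset.mem_Icc, Finset.mem_powersetCard, Finset.subset_univ, true_and]
    exact ⟨fun h => ⟨T.card, h, rfl⟩, fun ⟨j, hj, hc⟩ => hc ▸ hj⟩
  have hdisj : Set.PairwiseDisjoint ↑(Finset.Icc 2 t)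
      (fun j => (Finset.univ : Finset (Fin m)).powersetCard j) := by
    intro a _ b _ hab
    refine Finset.disjoint_left.2 fun T hTa hTb => hab ?_
    rw [← (Finset.mem_powersetCard.1 hTa).2, ← (Finset.mem_powersetCard.1 hTb).2]
  have main : μ {ω | ∃ T : Finset (Fin m), 2 ≤ T.card ∧ T.card ≤ t ∧
      ∀ x ∈ T, ∀ i : Fin k, ∃ y ∈ T, y ≠ x ∧ r i x ω = r i y ω} ≤
      ∑ j ∈ Finset.Icc 2 t, (m.choose j : ℝ≥0∞) * (((2 * t).choose (j / 2) : ℝ≥0∞)) ^ k *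
        (((j / 2 : ℕ) : ℝ≥0∞) / (2 * (t : ℝ≥0∞))) ^ (j * k) := by
    calc μ _ ≤ μ (⋃ T ∈ A, bad T) := measure_mono hEsub
      _ ≤ ∑ T ∈ A, μ (bad T) := measure_biUnion_finset_le _ _
      _ ≤ ∑ T ∈ A, (((2 * t).choose (T.card / 2) : ℝ≥0∞)) ^ k *
            (((T.card / 2 : ℕ) : ℝ≥0∞) / (2 * (t : ℝ≥0∞))) ^ (T.card * k) :=
          Finset.sum_le_sum fun T hT => key T (Finset.mem_filter.1 hT).2.2
      _ = ∑ j ∈ Finset.Icc 2 t, ∑ T ∈ (Finset.univ : Finset (Fin m)).powersetCard j,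
            (((2 * t).choose (T.card / 2) : ℝ≥0∞)) ^ k *
            (((T.card / 2 : ℕ) : ℝ≥0∞) / (2 * (t : ℝ≥0∞))) ^ (T.card * k) := by
          rw [hA, Finset.sum_biUnion hdisj]
      _ = ∑ j ∈ Finset.Icc 2 t, (m.choose j : ℝ≥0∞) * (((2 * t).choose (j / 2) : ℝ≥0∞)) ^ k *
            (((j / 2 : ℕ) : ℝ≥0∞) / (2 * (t : ℝ≥0∞))) ^ (j * k) := by
          refine Finset.sum_congr rfl fun j _ => ?_
          rw [Finset.sum_congr rfl (fun T hT => by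
            rw [(Finset.mem_powersetCard.1 hT).2]),
            Finset.sum_const, Finset.card_powersetCard, Finset.card_univ, Fintype.card_fin,
            nsmul_eq_mul, ← mul_assoc]
  have hterm : ∀ j ∈ Finset.Icc 2 t,
      (m.choose j : ℝ≥0∞) * (((2 * t).choose (j / 2) : ℝ≥0∞)) ^ k *
        (((j / 2 : ℕ) : ℝ≥0∞) / (2 * (t : ℝ≥0∞))) ^ (j * k) ≠ ⊤ := by
    intro j _
    refine ENNReal.mul_ne_top (ENNReal.mul_ne_top (ENNReal.natCast_ne_top _)
      (ENNReal.pow_ne_top (ENNReal.natCast_ne_top _))) (ENNReal.pow_ne_top ?_)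
    refine ne_of_lt (ENNReal.div_lt_top (ENNReal.natCast_ne_top _) ?_)
    simp [ht.ne']
  have hS : (∑ j ∈ Finset.Icc 2 t, (m.choose j : ℝ≥0∞) * (((2 * t).choose (j / 2) : ℝ≥0∞)) ^ k *
      (((j / 2 : ℕ) : ℝ≥0∞) / (2 * (t : ℝ≥0∞))) ^ (j * k)) ≠ ⊤ :=
    (ENNReal.sum_lt_top.2 fun j hj => lt_top_iff_ne_top.2 (hterm j hj)).ne
  refine le_trans (ENNReal.toReal_mono hS main) (le_of_eq ?_)
  rw [ENNReal.toReal_sum hterm]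
  refine Finset.sum_congr rfl fun j _ => ?_
  simp only [ENNReal.toReal_mul, ENNReal.toReal_pow, ENNReal.toReal_div,
    ENNReal.toReal_natCast, ENNReal.toReal_ofNat]
end

section
/- Let t, k be positive integers and let T be a finite set with 2 ≤ |T| = j ≤ t. Let (r_i(x)) for i ∈ {1,…,k} and x ∈ T be mutually independent random variables, each uniformly distributed on {1,…,2t}. Then the probability that for every x ∈ T and every i ∈ {1,…,k} there exists y ∈ T \ {x} with r_i(x) = r_i(y) is at most C(2t, ⌊j/2⌋)^k · (⌊j/2⌋/(2t))^{j·k}, where C(a,b) denotes the binomial coefficient. -/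
open MeasureTheory ProbabilityTheory ENNReal

/-- For a finite set `T` with `2 ≤ |T| = j ≤ t` and mutually
independent uniform random variables `rᵢ(x)` on `{1,…,2t}`, the probability that
no element of `T` is isolated under any `rᵢ` is at most
`C(2t,⌊j/2⌋)^k · (⌊j/2⌋/(2t))^{j·k}`. -/
theorem stmt3 (t k j : ℕ) (ht : 0 < t) (hk : 0 < k)
    (T : Type*) [Fintype T] (hT2 : 2 ≤ Fintype.card T) (hTj : Fintype.card T = j)
    (hjt : j ≤ t)
    {Ω : Type*} [MeasurableSpace Ω] (μ : Measure Ω) [IsProbabilityMeasure μ]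
    (r : Fin k → T → Ω → Fin (2 * t))
    (hindep : iIndepFun
      (fun p : Fin k × T => fun ω => r p.1 p.2 ω) μ)
    (hunif : ∀ (i : Fin k) (x : T) (c : Fin (2 * t)),
      μ {ω | r i x ω = c} = 1 / (2 * t)) :
    (μ {ω | ∀ (x : T) (i : Fin k), ∃ y : T, y ≠ x ∧ r i x ω = r i y ω}).toReal ≤
      ((2 * t).choose (j / 2) : ℝ) ^ k * (((j / 2 : ℕ) : ℝ) / (2 * t)) ^ (j * k) := by
  classical
  have hn0 : (2 * (t : ℝ≥0∞)) ≠ 0 := by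
    simp [ht.ne']
  have hmn : j / 2 ≤ 2 * t := by omega
  set A : Finset (Fin k → Finset (Fin (2 * t))) :=
    Fintype.piFinset fun _ => Finset.powersetCard (j / 2) Finset.univ with hA
  have hAcard : A.card = ((2 * t).choose (j / 2)) ^ k := by
    simp [hA, Fintype.card_piFinset, Finset.card_powersetCard]
  -- inclusion
  have hsub : {ω | ∀ (x : T) (i : Fin k), ∃ y : T, y ≠ x ∧ r i x ω = r i y ω} ⊆
      ⋃ S ∈ A, {ω | ∀ p : Fin k × T, r p.1 p.2 ω ∈ S p.1} := by
    intro ω hω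
    have hchoice : ∀ i : Fin k, ∃ s : Finset (Fin (2 * t)),
        (∀ x : T, r i x ω ∈ s) ∧ s.card = j / 2 := by
      intro i
      set f : T → Fin (2 * t) := fun x => r i x ω with hf
      have himg : (Finset.univ.image f).card ≤ j / 2 := by
        have hfib : ∀ b ∈ Finset.univ.image f,
            2 ≤ (Finset.univ.filter fun x => f x = b).card := by
          intro b hb
          obtain ⟨x, -, hx⟩ := Finset.mem_image.1 hb
          obtain ⟨y, hyx, hxy⟩ := hω x i
          have : 1 < (Finset.univ.filter fun x => f x = b).card :=
            Finset.one_lt_card.2 ⟨x, by simp [hx], y,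
              by simp only [Finset.mem_filter, Finset.mem_univ, true_and]; rw [show f y = r i y ω from rfl, ← hxy]; exact hx, fun h => hyx h.symm⟩
          omega
        have hsum := Finset.card_eq_sum_card_image f Finset.univ
        have h2 : 2 * (Finset.univ.image f).card ≤ j := by
          calc 2 * (Finset.univ.image f).card
              = ∑ _b ∈ Finset.univ.image f, 2 := by
                rw [Finset.sum_const, smul_eq_mul, mul_comm]
            _ ≤ ∑ b ∈ Finset.univ.image f,
                (Finset.univ.filter fun x => f x = b).card :=
                Finset.sum_le_sum hfib
            _ = (Finset.univ : Finset T).card := hsum.symm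
            _ = j := by rw [Finset.card_univ, hTj]
        omega
      obtain ⟨s, hs1, -, hcard⟩ := Finset.exists_subsuperset_card_eq
        (Finset.subset_univ (Finset.univ.image f)) himg
        (by simpa using hmn)
      exact ⟨s, fun x => hs1 (Finset.mem_image_of_mem f (Finset.mem_univ x)), hcard⟩
    choose S hS1 hS2 using hchoice
    refine Set.mem_iUnion₂.2 ⟨S, ?_, fun p => hS1 p.1 p.2⟩
    simp only [hA, Fintype.mem_piFinset, Finset.mem_powersetCard]
    exact fun i => ⟨Finset.subset_univ _, hS2 i⟩
  -- per-event bound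
  have hmeasS : ∀ S ∈ A, μ {ω | ∀ p : Fin k × T, r p.1 p.2 ω ∈ S p.1}
      ≤ ((↑(j / 2) : ℝ≥0∞) / (2 * t)) ^ (j * k) := by
    intro S hS
    have hSm : ∀ i, (S i).card = j / 2 := fun i =>
      (Finset.mem_powersetCard.1 (Fintype.mem_piFinset.1 hS i)).2
    have heq : {ω | ∀ p : Fin k × T, r p.1 p.2 ω ∈ S p.1}
        = ⋂ p ∈ (Finset.univ : Finset (Fin k × T)),
            (fun ω => r p.1 p.2 ω) ⁻¹' ↑(S p.1) := by
      ext ω; simp [Set.mem_iInter]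
    rw [heq, hindep.meas_biInter
      (fun p _ => ⟨↑(S p.1), (S p.1).measurableSet, rfl⟩)]
    have hfac : ∀ p : Fin k × T,
        μ ((fun ω => r p.1 p.2 ω) ⁻¹' ↑(S p.1)) ≤ (↑(j / 2) : ℝ≥0∞) / (2 * t) := by
      intro p
      have hpre : (fun ω => r p.1 p.2 ω) ⁻¹' ↑(S p.1)
          = ⋃ c ∈ S p.1, {ω | r p.1 p.2 ω = c} := by
        ext ω; simp
      calc μ ((fun ω => r p.1 p.2 ω) ⁻¹' ↑(S p.1))
          ≤ ∑ c ∈ S p.1, μ {ω | r p.1 p.2 ω = c} := by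
            rw [hpre]; exact measure_biUnion_finset_le _ _
        _ = ∑ _c ∈ S p.1, (1 : ℝ≥0∞) / (2 * t) := by
            refine Finset.sum_congr rfl fun c _ => ?_
            rw [hunif p.1 p.2 c]
        _ = (↑(j / 2) : ℝ≥0∞) / (2 * t) := by
            rw [Finset.sum_const, hSm, nsmul_eq_mul, mul_one_div]
    calc ∏ p ∈ Finset.univ, μ ((fun ω => r p.1 p.2 ω) ⁻¹' ↑(S p.1))
        ≤ ∏ _p ∈ (Finset.univ : Finset (Fin k × T)), ((↑(j / 2) : ℝ≥0∞) / (2 * t)) :=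
          Finset.prod_le_prod' fun p _ => hfac p
      _ = ((↑(j / 2) : ℝ≥0∞) / (2 * t)) ^ (j * k) := by
          rw [Finset.prod_const, Finset.card_univ, Fintype.card_prod,
            Fintype.card_fin, hTj, Nat.mul_comm k j]
  -- union bound
  have hmain : μ {ω | ∀ (x : T) (i : Fin k), ∃ y : T, y ≠ x ∧ r i x ω = r i y ω}
      ≤ (((2 * t).choose (j / 2) : ℝ≥0∞)) ^ k * ((↑(j / 2) : ℝ≥0∞) / (2 * t)) ^ (j * k) := by
    calc μ {ω | ∀ (x : T) (i : Fin k), ∃ y : T, y ≠ x ∧ r i x ω = r i y ω}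
        ≤ μ (⋃ S ∈ A, {ω | ∀ p : Fin k × T, r p.1 p.2 ω ∈ S p.1}) :=
          measure_mono hsub
      _ ≤ ∑ S ∈ A, μ {ω | ∀ p : Fin k × T, r p.1 p.2 ω ∈ S p.1} :=
          measure_biUnion_finset_le _ _
      _ ≤ ∑ _S ∈ A, ((↑(j / 2) : ℝ≥0∞) / (2 * t)) ^ (j * k) := Finset.sum_le_sum hmeasS
      _ = (((2 * t).choose (j / 2) : ℝ≥0∞)) ^ k * ((↑(j / 2) : ℝ≥0∞) / (2 * t)) ^ (j * k) := by
          rw [Finset.sum_const, hAcard, nsmul_eq_mul]; push_cast; ring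
  have hfin : (((2 * t).choose (j / 2) : ℝ≥0∞)) ^ k * ((↑(j / 2) : ℝ≥0∞) / (2 * t)) ^ (j * k) ≠ ⊤ := by
    refine ENNReal.mul_ne_top (ENNReal.pow_ne_top (ENNReal.natCast_ne_top _))
      (ENNReal.pow_ne_top (ENNReal.div_lt_top (ENNReal.natCast_ne_top _) hn0).ne)
  refine le_trans (ENNReal.toReal_mono hfin hmain) (le_of_eq ?_)
  rw [ENNReal.toReal_mul, ENNReal.toReal_pow, ENNReal.toReal_pow, ENNReal.toReal_div]
  push_cast
  norm_num
end

section
/- Let m, t, k be integers with m ≥ 1, t ≥ 2, k ≥ 2, and (e/3)^{k/2} ≤ 1/m (equivalently k ≥ 2·log m / log(3/e)). Then Σ_{j=2}^{t} m^j · (e·j/(4t))^{j·k/2} ≤ 4 · (3/4)^k, where e is Euler's number and the powers are real powers. -/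
/-- Analytic inequality: if `(e/3)^{k/2} ≤ 1/m`, `m ≥ 1`, `t ≥ 2`,
`k ≥ 2`, then `Σ_{j=2}^{t} m^j · (e·j/(4t))^{j·k/2} ≤ 4·(3/4)^k`. -/
theorem stmt5 (m t k : ℕ) (hm : 1 ≤ m) (ht : 2 ≤ t) (hk : 2 ≤ k)
    (h : (Real.exp 1 / 3) ^ ((k : ℝ) / 2) ≤ 1 / (m : ℝ)) :
    ∑ j ∈ Finset.Icc 2 t,
        (m : ℝ) ^ j * (Real.exp 1 * j / (4 * t)) ^ (((j * k : ℕ) : ℝ) / 2) ≤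
      4 * (3 / 4 : ℝ) ^ k := by
  have hm0 : (0:ℝ) < m := by positivity
  have ht0 : (0:ℝ) < t := by positivity
  have he : (0:ℝ) < Real.exp 1 := Real.exp_pos 1
  set r : ℝ := (3 / 4 : ℝ) ^ ((k : ℝ) / 2) with hr
  have hr0 : 0 ≤ r := Real.rpow_nonneg (by norm_num) _
  have hr34 : r ≤ 3 / 4 := by
    have h2k : (1:ℝ) ≤ (k:ℝ)/2 := by
      have : (2:ℝ) ≤ (k:ℝ) := by exact_mod_cast hk
      linarith
    have := Real.rpow_le_rpow_of_exponent_ge (x := (3/4:ℝ)) (by norm_num) (by norm_num) h2k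
    simpa using this
  set a : ℝ := (Real.exp 1 / 4) ^ ((k : ℝ) / 2) with ha
  have ha0 : 0 ≤ a := Real.rpow_nonneg (by positivity) _
  have hma : (m:ℝ) * a ≤ r := by
    have hsplit : a = (Real.exp 1 / 3) ^ ((k : ℝ) / 2) * r := by
      rw [ha, hr, ← Real.mul_rpow (by positivity) (by norm_num)]
      ring_nf
    have h1 : (m:ℝ) * (Real.exp 1 / 3) ^ ((k : ℝ) / 2) ≤ 1 := by
      have := mul_le_mul_of_nonneg_left h (le_of_lt hm0)
      rw [mul_one_div, div_self (ne_of_gt hm0)] at this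
      exact this
    calc (m:ℝ) * a = ((m:ℝ) * (Real.exp 1 / 3) ^ ((k : ℝ) / 2)) * r := by
            rw [hsplit]; ring
      _ ≤ 1 * r := mul_le_mul_of_nonneg_right h1 hr0
      _ = r := one_mul r
  -- each term is ≤ r ^ j
  have key : ∀ j ∈ Finset.Icc 2 t,
      (m : ℝ) ^ j * (Real.exp 1 * j / (4 * t)) ^ (((j * k : ℕ) : ℝ) / 2) ≤ r ^ j := by
    intro j hj
    simp only [Finset.mem_Icc] at hj
    have hbase : Real.exp 1 * j / (4 * t) ≤ Real.exp 1 / 4 := by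
      rw [div_le_div_iff₀ (by positivity) (by norm_num)]
      have hjt : (j:ℝ) ≤ (t:ℝ) := by exact_mod_cast hj.2
      nlinarith
    have hstep1 : (Real.exp 1 * j / (4 * t)) ^ (((j * k : ℕ) : ℝ) / 2)
        ≤ (Real.exp 1 / 4) ^ (((j * k : ℕ) : ℝ) / 2) := by
      apply Real.rpow_le_rpow (by positivity) hbase (by positivity)
    have hstep2 : (Real.exp 1 / 4) ^ (((j * k : ℕ) : ℝ) / 2) = a ^ j := by
      rw [ha, ← Real.rpow_natCast ((Real.exp 1 / 4) ^ ((k : ℝ) / 2)) j,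
        ← Real.rpow_mul (by positivity)]
      congr 1
      push_cast
      ring
    calc (m : ℝ) ^ j * (Real.exp 1 * j / (4 * t)) ^ (((j * k : ℕ) : ℝ) / 2)
        ≤ (m : ℝ) ^ j * a ^ j := by
          rw [← hstep2]
          exact mul_le_mul_of_nonneg_left hstep1 (by positivity)
      _ = ((m:ℝ) * a) ^ j := (mul_pow _ _ _).symm
      _ ≤ r ^ j := pow_le_pow_left₀ (by positivity) hma j
  have hsum : ∑ j ∈ Finset.Icc 2 t, r ^ j ≤ 4 * r ^ 2 := by
    have : ∑ j ∈ Finset.Icc 2 t, r ^ j = ∑ i ∈ Finset.range (t + 1 - 2), r ^ (2 + i) := by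
      rw [← Finset.Ico_add_one_right_eq_Icc, Finset.sum_Ico_eq_sum_range]
    rw [this]
    have : ∑ i ∈ Finset.range (t + 1 - 2), r ^ (2 + i)
        = r ^ 2 * ∑ i ∈ Finset.range (t + 1 - 2), r ^ i := by
      rw [Finset.mul_sum]
      exact Finset.sum_congr rfl fun i _ => pow_add r 2 i
    rw [this]
    have hgeom : ∑ i ∈ Finset.range (t + 1 - 2), r ^ i ≤ 4 := by
      calc ∑ i ∈ Finset.range (t + 1 - 2), r ^ i
          ≤ ∑ i ∈ Finset.range (t + 1 - 2), (3/4:ℝ) ^ i :=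
            Finset.sum_le_sum fun i _ => pow_le_pow_left₀ hr0 hr34 i
        _ ≤ 4 := by
            rw [geom_sum_eq (by norm_num : (3/4:ℝ) ≠ 1)]
            have : (0:ℝ) ≤ (3/4:ℝ) ^ (t + 1 - 2) := by positivity
            rw [div_le_iff_of_neg (by norm_num : (3/4:ℝ) - 1 < 0)]
            linarith
    nlinarith [sq_nonneg r]
  have hr2 : r ^ 2 = (3/4:ℝ) ^ k := by
    rw [hr, ← Real.rpow_natCast ((3/4:ℝ) ^ ((k:ℝ)/2)) 2, ← Real.rpow_mul (by norm_num)]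
    rw [← Real.rpow_natCast (3/4:ℝ) k]
    congr 1
    push_cast
    ring
  calc ∑ j ∈ Finset.Icc 2 t,
        (m : ℝ) ^ j * (Real.exp 1 * j / (4 * t)) ^ (((j * k : ℕ) : ℝ) / 2)
      ≤ ∑ j ∈ Finset.Icc 2 t, r ^ j := Finset.sum_le_sum key
    _ ≤ 4 * r ^ 2 := hsum
    _ = 4 * (3/4:ℝ) ^ k := by rw [hr2]
end

section
/- Fix positive integers n, m, k, t and q ≥ 2, a matrix A over ℤ/qℤ of size n×m, and functions r_1,…,r_k : {1,…,m} → {1,…,2t}. Let X_0, X_1 ⊆ {1,…,m} be finite sets whose symmetric difference D := X_0 △ X_1 is nonempty, and suppose that for every nonempty subset T ⊆ D there exist x ∈ T and i ∈ {1,…,k} such that r_i(x) ≠ r_i(y) for all y ∈ T \ {x}. Then there exists an enumeration x_1,…,x_n of D (with n = |D|) such that for every j ∈ {1,…,n}, writing X_b^{(j)} := X_b \ {x_1,…,x_{j−1}} for b ∈ {0,1}, there is some i ∈ {1,…,k} for which the cell (i, r_i(x_j)) of the matrix Enc(X_0^{(j)}) − Enc(X_1^{(j)}) equals A e_{x_j}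 if x_j ∈ X_0 and equals −A e_{x_j} if x_j ∈ X_1. -/
/-- The IBLT-style encoding: `Enc A r X` is the `k × 2t` array over `(ℤ/qℤ)ⁿ`
whose `(i,j)` cell is `Σ_{x ∈ X, rᵢ(x) = j} A e_x` (column sums of `A`). -/
noncomputable def Enc {n m k t q : ℕ} (A : Matrix (Fin n) (Fin m) (ZMod q))
    (r : Fin k → Fin m → Fin (2 * t)) (X : Finset (Fin m))
    (i : Fin k) (j : Fin (2 * t)) : Fin n → ZMod q :=
  ∑ x ∈ X.filter (fun x => r i x = j), (fun a => A a x)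

lemma peel_aux {m k t : ℕ} (r : Fin k → Fin m → Fin (2 * t)) :
    ∀ N (D : Finset (Fin m)), D.card = N →
    (∀ T ⊆ D, T.Nonempty → ∃ x ∈ T, ∃ i : Fin k, ∀ y ∈ T, y ≠ x → r i x ≠ r i y) →
    ∃ f : Fin D.card → Fin m, Function.Injective f ∧ Finset.image f Finset.univ = D ∧
      ∀ j : Fin D.card, ∃ i : Fin k,
        ∀ y ∈ D \ (Finset.univ.filter (fun l => l < j)).image f,
          y ≠ f j → r i (f j) ≠ r i y := by
  intro N
  induction N with
  | zero =>
    intro D hD _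
    rcases Finset.card_eq_zero.mp hD with rfl
    refine ⟨fun j => absurd j.2 (by simp), ?_, ?_, ?_⟩
    · intro a b _; exact absurd a.2 (by simp)
    · ext y
      simp only [Finset.mem_image, Finset.notMem_empty, iff_false]
      rintro ⟨a, -, -⟩; exact absurd a.2 (by simp)
    · intro j; exact absurd j.2 (by simp)
  | succ N ih =>
    intro D hD hpeel
    have hDne : D.Nonempty := Finset.card_pos.mp (by omega)
    obtain ⟨x, hxD, i₀, hiso₀⟩ := hpeel D (le_refl _) hDne
    set D' := D.erase x with hD'
    have hcard' : D'.card = N := by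
      rw [hD', Finset.card_erase_of_mem hxD]; omega
    have hsub' : D' ⊆ D := Finset.erase_subset _ _
    obtain ⟨f', hinj', himg', hiso'⟩ := ih D' hcard'
      (fun T hT hTne => hpeel T (hT.trans hsub') hTne)
    have hcc : D'.card + 1 = D.card := by
      rw [hcard', hD]
    have hpos : ∀ j : Fin D.card, (j : ℕ) ≠ 0 → (j : ℕ) - 1 < D'.card := by
      intro j hj; have := j.2; omega
    refine ⟨fun j => if h : (j : ℕ) = 0 then x else f' ⟨(j : ℕ) - 1, hpos j h⟩,
      ?_, ?_, ?_⟩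
    · -- injectivity
      intro a b hab
      by_cases ha : (a : ℕ) = 0 <;> by_cases hb : (b : ℕ) = 0
      · exact Fin.ext (by omega)
      · simp only [ha, hb, dif_pos, dif_neg, not_false_iff] at hab
        exfalso
        have h1 : f' ⟨(b : ℕ) - 1, hpos b hb⟩ ∈ Finset.image f' Finset.univ :=
          Finset.mem_image_of_mem _ (Finset.mem_univ _)
        rw [himg'] at h1
        rw [← hab] at h1
        exact (Finset.notMem_erase x D) h1
      · simp only [ha, hb, dif_pos, dif_neg, not_false_iff] at hab
        exfalso
        have h1 : f' ⟨(a : ℕ) - 1, hpos a ha⟩ ∈ Finset.image f' Finset.univ :=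
          Finset.mem_image_of_mem _ (Finset.mem_univ _)
        rw [himg'] at h1
        rw [hab] at h1
        exact (Finset.notMem_erase x D) h1
      · simp only [ha, hb, dif_neg, not_false_iff] at hab
        have := hinj' hab
        have : (a : ℕ) - 1 = (b : ℕ) - 1 := congrArg Fin.val this
        exact Fin.ext (by omega)
    · -- image
      ext y
      simp only [Finset.mem_image, Finset.mem_univ, true_and]
      constructor
      · rintro ⟨a, rfl⟩
        by_cases ha : (a : ℕ) = 0
        · simp only [ha, dif_pos]; exact hxD
        · simp only [ha, dif_neg, not_false_iff]
          have h1 : f' ⟨(a : ℕ) - 1, hpos a ha⟩ ∈ Finset.image f' Finset.univ :=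
            Finset.mem_image_of_mem _ (Finset.mem_univ _)
          rw [himg'] at h1
          exact hsub' h1
      · intro hy
        by_cases hyx : y = x
        · refine ⟨⟨0, by omega⟩, ?_⟩
          simp [hyx]
        · have hy' : y ∈ D' := Finset.mem_erase.mpr ⟨hyx, hy⟩
          rw [← himg'] at hy'
          simp only [Finset.mem_image, Finset.mem_univ, true_and] at hy'
          obtain ⟨a', rfl⟩ := hy'
          refine ⟨⟨(a' : ℕ) + 1, by omega⟩, ?_⟩
          have : ((⟨(a' : ℕ) + 1, by omega⟩ : Fin D.card) : ℕ) ≠ 0 := by simp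
          simp only [this, dif_neg, not_false_iff]
          exact congrArg f' (Fin.ext (by simp))
    · -- isolation
      intro j
      by_cases hj : (j : ℕ) = 0
      · refine ⟨i₀, ?_⟩
        intro y hy hyx hr
        simp only [hj, dif_pos] at hyx hr ⊢
        have hyD : y ∈ D := (Finset.mem_sdiff.mp hy).1
        exact hiso₀ y hyD hyx hr
      · set j' : Fin D'.card := ⟨(j : ℕ) - 1, hpos j hj⟩ with hj'
        obtain ⟨i, hi⟩ := hiso' j'
        refine ⟨i, ?_⟩
        have hval : (fun l : Fin D.card =>
            if h : (l : ℕ) = 0 then x else f' ⟨(l : ℕ) - 1, hpos l h⟩) j = f' j' := by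
          simp only [hj, dif_neg, not_false_iff]; rfl
        intro y hy hyne
        simp only [hj, dif_neg, not_false_iff] at hyne ⊢
        -- show y ∈ D' \ image f' {l < j'}
        apply hi y
        rw [Finset.mem_sdiff] at hy ⊢
        obtain ⟨hyD, hynotim⟩ := hy
        constructor
        · refine Finset.mem_erase.mpr ⟨?_, hyD⟩
          intro hyx
          apply hynotim
          simp only [Finset.mem_image, Finset.mem_filter, Finset.mem_univ, true_and]
          refine ⟨⟨0, by omega⟩, Fin.lt_def.mpr (show 0 < (j : ℕ) by omega), ?_⟩
          simp [hyx]
        · intro hyim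
          apply hynotim
          simp only [Finset.mem_image, Finset.mem_filter, Finset.mem_univ, true_and] at hyim ⊢
          obtain ⟨l', hl', rfl⟩ := hyim
          refine ⟨⟨(l' : ℕ) + 1, by omega⟩, ?_, ?_⟩
          · have hlt : (l' : ℕ) < (j : ℕ) - 1 := hl'
            exact Fin.lt_def.mpr (show (l' : ℕ) + 1 < (j : ℕ) by omega)
          · have : (((⟨(l' : ℕ) + 1, by omega⟩ : Fin D.card)) : ℕ) ≠ 0 := by simp
            simp only [this, dif_neg, not_false_iff]
            exact congrArg f' (Fin.ext (by simp))
        · exact hyne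
  -- done

/-- If every nonempty subset of the (nonempty) symmetric difference
`D = X₀ △ X₁` contains an element isolated under some hash function, then `D` can
be enumerated as `x₁,…,x_n` such that at each step `j` some cell `(i, rᵢ(x_j))` of
`Enc(X₀⁽ʲ⁾) − Enc(X₁⁽ʲ⁾)` (where `X_b⁽ʲ⁾ = X_b \ {x₁,…,x_{j−1}}`) equals exactly
`A e_{x_j}` if `x_j ∈ X₀`, and `−A e_{x_j}` if `x_j ∈ X₁`. -/
theorem stmt11 (n m k t q : ℕ) (hn : 0 < n) (hm : 0 < m) (hk : 0 < k) (ht : 0 < t)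
    (hq : 2 ≤ q)
    (A : Matrix (Fin n) (Fin m) (ZMod q)) (r : Fin k → Fin m → Fin (2 * t))
    (X0 X1 : Finset (Fin m))
    (hD : ((X0 \ X1) ∪ (X1 \ X0)).Nonempty)
    (hpeel : ∀ T ⊆ (X0 \ X1) ∪ (X1 \ X0), T.Nonempty →
      ∃ x ∈ T, ∃ i : Fin k, ∀ y ∈ T, y ≠ x → r i x ≠ r i y) :
    ∃ f : Fin ((X0 \ X1) ∪ (X1 \ X0)).card → Fin m,
      Function.Injective f ∧
      Finset.image f Finset.univ = (X0 \ X1) ∪ (X1 \ X0) ∧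
      ∀ j : Fin ((X0 \ X1) ∪ (X1 \ X0)).card, ∃ i : Fin k,
        Enc A r (X0 \ (Finset.univ.filter (fun l => l < j)).image f) i (r i (f j)) -
          Enc A r (X1 \ (Finset.univ.filter (fun l => l < j)).image f) i (r i (f j)) =
        if f j ∈ X0 then (fun a => A a (f j)) else (fun a => -A a (f j)) := by
  classical
  set D := (X0 \ X1) ∪ (X1 \ X0) with hDdef
  obtain ⟨f, hinj, himg, hiso⟩ := peel_aux r D.card D rfl hpeel
  refine ⟨f, hinj, himg, ?_⟩
  intro j
  obtain ⟨i, hi⟩ := hiso j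
  refine ⟨i, ?_⟩
  set x := f j with hx
  set P := (Finset.univ.filter (fun l => l < j)).image f with hP
  have hxD : x ∈ D := by rw [← himg]; exact Finset.mem_image_of_mem _ (Finset.mem_univ _)
  have hxP : x ∉ P := by
    intro hxp
    simp only [hP, Finset.mem_image, Finset.mem_filter, Finset.mem_univ, true_and] at hxp
    obtain ⟨l, hl, hfl⟩ := hxp
    have := hinj hfl
    subst this
    exact lt_irrefl _ hl
  set p : Fin m → Prop := fun y => r i y = r i x with hp
  -- key set identities
  have hs0 : (X0 \ P) \ (X1 \ P) = (X0 \ X1) \ P := by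
    ext y; simp only [Finset.mem_sdiff]; tauto
  have hs1 : (X1 \ P) \ (X0 \ P) = (X1 \ X0) \ P := by
    ext y; simp only [Finset.mem_sdiff]; tauto
  have hiso' : ∀ y ∈ D, y ∉ P → r i y = r i x → y = x := by
    intro y hyD hyP hry
    by_contra hne
    exact hi y (Finset.mem_sdiff.mpr ⟨hyD, hyP⟩) hne hry.symm
  have hsub0 : ((X0 \ X1) \ P).filter (fun y => r i y = r i x) ⊆ {x} := by
    intro y hy
    simp only [Finset.mem_filter, Finset.mem_sdiff] at hy
    obtain ⟨⟨hy01, hyP⟩, hry⟩ := hy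
    have : y ∈ D := Finset.mem_union_left _ (Finset.mem_sdiff.mpr hy01)
    simp only [Finset.mem_singleton]
    exact hiso' y this hyP hry
  have hsub1 : ((X1 \ X0) \ P).filter (fun y => r i y = r i x) ⊆ {x} := by
    intro y hy
    simp only [Finset.mem_filter, Finset.mem_sdiff] at hy
    obtain ⟨⟨hy10, hyP⟩, hry⟩ := hy
    have : y ∈ D := Finset.mem_union_right _ (Finset.mem_sdiff.mpr hy10)
    simp only [Finset.mem_singleton]
    exact hiso' y this hyP hry
  have key : Enc A r (X0 \ P) i (r i x) - Enc A r (X1 \ P) i (r i x) =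
      (∑ y ∈ ((X0 \ X1) \ P).filter (fun y => r i y = r i x), (fun a => A a y)) -
      (∑ y ∈ ((X1 \ X0) \ P).filter (fun y => r i y = r i x), (fun a => A a y)) := by
    have hfs : ∀ (a b : Finset (Fin m)),
        (a \ b).filter (fun y => r i y = r i x) =
        a.filter (fun y => r i y = r i x) \ b.filter (fun y => r i y = r i x) := by
      intro a b
      ext y
      simp only [Finset.mem_filter, Finset.mem_sdiff]
      tauto
    unfold Enc
    rw [← hs0, ← hs1, hfs (X0 \ P) (X1 \ P), hfs (X1 \ P) (X0 \ P)]
    exact (Finset.sum_sdiff_sub_sum_sdiff).symm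
  rw [key]
  by_cases hx0 : x ∈ X0
  · have hx01 : x ∈ X0 \ X1 := by
      rcases Finset.mem_union.mp hxD with h | h
      · exact h
      · exact absurd hx0 (Finset.mem_sdiff.mp h).2.elim
    have hx1 : x ∉ X1 := (Finset.mem_sdiff.mp hx01).2
    have e0 : ((X0 \ X1) \ P).filter (fun y => r i y = r i x) = {x} := by
      refine Finset.Subset.antisymm hsub0 ?_
      intro y hy
      simp only [Finset.mem_singleton] at hy
      subst hy
      simp only [Finset.mem_filter, Finset.mem_sdiff]
      refine ⟨⟨Finset.mem_sdiff.mp hx01, hxP⟩, ?_⟩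
      trivial
    have e1 : ((X1 \ X0) \ P).filter (fun y => r i y = r i x) = ∅ := by
      rw [Finset.eq_empty_iff_forall_notMem]
      intro y hy
      have := hsub1 hy
      simp only [Finset.mem_singleton] at this
      subst this
      simp only [Finset.mem_filter, Finset.mem_sdiff] at hy
      exact hy.1.1.2 hx0
    rw [e0, e1, if_pos hx0]
    simp
  · have hx10 : x ∈ X1 \ X0 := by
      rcases Finset.mem_union.mp hxD with h | h
      · exact absurd (Finset.mem_sdiff.mp h).1 hx0
      · exact h
    have e0 : ((X0 \ X1) \ P).filter (fun y => r i y = r i x) = ∅ := by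
      rw [Finset.eq_empty_iff_forall_notMem]
      intro y hy
      have := hsub0 hy
      simp only [Finset.mem_singleton] at this
      subst this
      simp only [Finset.mem_filter, Finset.mem_sdiff] at hy
      exact hx0 hy.1.1.1
    have e1 : ((X1 \ X0) \ P).filter (fun y => r i y = r i x) = {x} := by
      refine Finset.Subset.antisymm hsub1 ?_
      intro y hy
      simp only [Finset.mem_singleton] at hy
      subst hy
      simp only [Finset.mem_filter, Finset.mem_sdiff]
      refine ⟨⟨Finset.mem_sdiff.mp hx10, hxP⟩, ?_⟩
      trivial
    rw [e0, e1, if_neg hx0]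
    funext a
    simp
end
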